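/- For all r > 0 and γ > 1 there exists a constant c = c(r, γ) such that for all positive integers N and all integers k ≥ 0: Σ_{m=1}^N m^r / (1 + |m - k|^γ) ≤ c ( N^{max(1 + r - γ, 0)} + (if γ = 1 + r then log N else 0) + k^r ). -/

import Mathlib

open Finset

lemma hsummable {γ : ℝ} (hγ : 1 < γ) : Summable (fun d : ℕ => 1 / (d:ℝ)^γ) :=
  (Real.summable_one_div_nat_rpow).mpr hγ

lemma hrange {γ : ℝ} (hγ : 1 < γ) (K : ℕ) :
    ∑ d ∈ Finset.range K, 1/(1+(d:ℝ)^γ) ≤ 1 + ∑' d:ℕ, 1/(d:ℝ)^γ := by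
  have hsum := hsummable hγ
  have htnn : 0 ≤ ∑' d:ℕ, 1/(d:ℝ)^γ := tsum_nonneg (fun d => by positivity)
  rcases K with _ | K
  · simp only [Finset.range_zero, Finset.sum_empty]; linarith
  · rw [Finset.sum_range_succ']
    have h0 : 1/(1+((0:ℕ):ℝ)^γ) = 1 := by
      rw [Nat.cast_zero, Real.zero_rpow (by linarith)]; norm_num
    rw [h0, add_comm]
    gcongr 1 + ?_
    calc ∑ i ∈ Finset.range K, 1/(1+((i+1:ℕ):ℝ)^γ)
        ≤ ∑ i ∈ Finset.range K, 1/((i+1:ℕ):ℝ)^γ := by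
          apply Finset.sum_le_sum; intro i _
          have : (0:ℝ) < ((i+1:ℕ):ℝ)^γ := by positivity
          gcongr; linarith
      _ ≤ ∑ i ∈ Finset.range (K+1), 1/((i:ℕ):ℝ)^γ := by
          rw [Finset.sum_range_succ']
          simp only [Nat.cast_zero, Real.zero_rpow (show γ ≠ 0 by linarith)]
          norm_num
      _ ≤ ∑' d:ℕ, 1/(d:ℝ)^γ := Summable.sum_le_tsum _ (fun d _ => by positivity) hsum

lemma natdist (m k : ℕ) : |(m:ℝ) - (k:ℝ)| = (Nat.dist m k : ℝ) := by
  rcases le_total m k with h | h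
  · rw [Nat.dist_eq_sub_of_le h, abs_sub_comm,
      abs_of_nonneg (by linarith [(Nat.cast_le (α := ℝ)).2 h]), Nat.cast_sub h]
  · rw [Nat.dist_eq_sub_of_le_right h,
      abs_of_nonneg (by linarith [(Nat.cast_le (α := ℝ)).2 h]), Nat.cast_sub h]

lemma gsum {γ : ℝ} (hγ : 1 < γ) (N k : ℕ) :
    ∑ m ∈ Finset.Icc 1 N, 1/(1+|(m:ℝ)-(k:ℝ)|^γ) ≤ 2*(1 + ∑' d:ℕ, 1/(d:ℝ)^γ) := by
  have hnn : ∀ d : ℕ, (0:ℝ) ≤ 1/(1+(d:ℝ)^γ) := fun d => by positivity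
  have hrw : ∀ m ∈ Finset.Icc 1 N, 1/(1+|(m:ℝ)-(k:ℝ)|^γ) = 1/(1+((Nat.dist m k : ℕ):ℝ)^γ) :=
    fun m _ => by rw [natdist]
  rw [Finset.sum_congr rfl hrw,
    ← Finset.sum_filter_add_sum_filter_not (Finset.Icc 1 N) (· ≤ k)]
  have h1 : ∑ m ∈ (Finset.Icc 1 N).filter (· ≤ k), 1/(1+((Nat.dist m k : ℕ):ℝ)^γ)
      ≤ 1 + ∑' d:ℕ, 1/(d:ℝ)^γ := by
    have hinj : ∀ x ∈ (Finset.Icc 1 N).filter (· ≤ k), ∀ y ∈ (Finset.Icc 1 N).filter (· ≤ k),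
        k - x = k - y → x = y := by
      intro x hx y hy h
      simp only [Finset.mem_filter, Finset.mem_Icc] at hx hy
      omega
    calc ∑ m ∈ (Finset.Icc 1 N).filter (· ≤ k), 1/(1+((Nat.dist m k : ℕ):ℝ)^γ)
        = ∑ m ∈ (Finset.Icc 1 N).filter (· ≤ k), 1/(1+(((k - m : ℕ)):ℝ)^γ) := by
          apply Finset.sum_congr rfl; intro m hm
          simp only [Finset.mem_filter] at hm
          rw [Nat.dist_eq_sub_of_le hm.2]
      _ = ∑ d ∈ ((Finset.Icc 1 N).filter (· ≤ k)).image (fun x => k - x), 1/(1+((d:ℕ):ℝ)^γ) :=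
          by exact (Finset.sum_image (g := fun x => k - x) (f := fun d : ℕ => 1/(1+(d:ℝ)^γ)) hinj).symm
      _ ≤ ∑ d ∈ Finset.range (k+1), 1/(1+((d:ℕ):ℝ)^γ) := by
          apply Finset.sum_le_sum_of_subset_of_nonneg
          · intro d hd
            simp only [Finset.mem_image] at hd
            obtain ⟨m, _, rfl⟩ := hd
            simp only [Finset.mem_range]; omega
          · intro d _ _; exact hnn d
      _ ≤ 1 + ∑' d:ℕ, 1/(d:ℝ)^γ := hrange hγ _
  have h2 : ∑ m ∈ (Finset.Icc 1 N).filter (¬ · ≤ k), 1/(1+((Nat.dist m k : ℕ):ℝ)^γ)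
      ≤ 1 + ∑' d:ℕ, 1/(d:ℝ)^γ := by
    have hinj : ∀ x ∈ (Finset.Icc 1 N).filter (¬ · ≤ k), ∀ y ∈ (Finset.Icc 1 N).filter (¬ · ≤ k),
        x - k = y - k → x = y := by
      intro x hx y hy h
      simp only [Finset.mem_filter, Finset.mem_Icc, not_le] at hx hy
      omega
    calc ∑ m ∈ (Finset.Icc 1 N).filter (¬ · ≤ k), 1/(1+((Nat.dist m k : ℕ):ℝ)^γ)
        = ∑ m ∈ (Finset.Icc 1 N).filter (¬ · ≤ k), 1/(1+(((m - k : ℕ)):ℝ)^γ) := by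
          apply Finset.sum_congr rfl; intro m hm
          simp only [Finset.mem_filter, not_le] at hm
          rw [Nat.dist_eq_sub_of_le_right hm.2.le]
      _ = ∑ d ∈ ((Finset.Icc 1 N).filter (¬ · ≤ k)).image (fun x => x - k), 1/(1+((d:ℕ):ℝ)^γ) :=
          by exact (Finset.sum_image (g := fun x => x - k) (f := fun d : ℕ => 1/(1+(d:ℝ)^γ)) hinj).symm
      _ ≤ ∑ d ∈ Finset.range (N+1), 1/(1+((d:ℕ):ℝ)^γ) := by
          apply Finset.sum_le_sum_of_subset_of_nonneg
          · intro d hd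
            simp only [Finset.mem_image] at hd
            obtain ⟨m, hm, rfl⟩ := hd
            simp only [Finset.mem_filter, Finset.mem_Icc] at hm
            simp only [Finset.mem_range]; omega
          · intro d _ _; exact hnn d
      _ ≤ 1 + ∑' d:ℕ, 1/(d:ℝ)^γ := hrange hγ _
  linarith

lemma Bgt {s : ℝ} (hs : -1 < s) {N : ℕ} (hN : 1 ≤ N) :
    ∑ m ∈ Finset.Icc 1 N, (m:ℝ)^s ≤ (1 + 1/(1+s)) * (N:ℝ)^(1+s) := by
  have h2 : (0:ℝ) < 1 + s := by linarith
  have hA : (1:ℝ) ≤ (N:ℝ)^(1+s) :=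
    Real.one_le_rpow (by exact_mod_cast hN) h2.le
  rcases le_or_gt 0 s with h0 | h0
  · -- s ≥ 0 : each term ≤ N^s
    have : ∑ m ∈ Finset.Icc 1 N, (m:ℝ)^s ≤ (N:ℝ)^(1+s) := by
      calc ∑ m ∈ Finset.Icc 1 N, (m:ℝ)^s ≤ (Finset.Icc 1 N).card • ((N:ℝ)^s) := by
            apply Finset.sum_le_card_nsmul
            intro m hm
            simp only [Finset.mem_Icc] at hm
            exact Real.rpow_le_rpow (by positivity) (by exact_mod_cast hm.2) h0
        _ = (N:ℝ) * (N:ℝ)^s := by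
            rw [Nat.card_Icc, nsmul_eq_mul]; norm_num
        _ = (N:ℝ)^(1+s) := by
            rw [Real.rpow_add (by exact_mod_cast hN : (0:ℝ) < N), Real.rpow_one]
    have h3 : (0:ℝ) < 1/(1+s) := by positivity
    nlinarith [Real.rpow_nonneg (Nat.cast_nonneg N) (1+s)]
  · -- -1 < s < 0 : integral comparison
    obtain ⟨M, rfl⟩ : ∃ M, N = M + 1 := ⟨N - 1, by omega⟩
    have hf : AntitoneOn (fun x : ℝ => x ^ s) (Set.Icc (1:ℝ) (1 + (M:ℕ))) := by
      intro x hx y hy hxy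
      exact Real.rpow_le_rpow_of_nonpos (lt_of_lt_of_le one_pos hx.1) hxy h0.le
    have key := hf.sum_le_integral
    have hint : ∫ x in (1:ℝ)..(1 + (M:ℕ)), x ^ s
        = ((1 + (M:ℝ))^(s+1) - 1)/(s+1) := by
      rw [integral_rpow (Or.inl hs)]
      norm_num
    rw [hint] at key
    have hsum : ∑ m ∈ Finset.Icc 1 (M+1), (m:ℝ)^s
        = 1 + ∑ i ∈ Finset.range M, ((1:ℝ) + ((i+1:ℕ):ℝ))^s := by
      rw [← Finset.Ico_add_one_right_eq_Icc, Finset.sum_Ico_eq_sum_range]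
      simp only [Nat.add_sub_cancel]
      rw [Finset.sum_range_succ']
      push_cast
      rw [add_comm]
      norm_num
    have hNc : ((M+1:ℕ):ℝ) = 1 + (M:ℝ) := by push_cast; ring
    rw [hsum, hNc]
    have hA' : (1:ℝ) ≤ (1+(M:ℝ))^(s+1) := by
      rw [show s+1 = 1+s by ring, ← hNc]; exact hA
    have : ((1 + (M:ℝ))^(s+1) - 1)/(s+1) + 1 ≤ (1 + (M:ℝ))^(s+1)/(s+1) + (1 + (M:ℝ))^(s+1) := by
      gcongr <;> linarith [hA']
    have heq : (1 + 1/(1+s)) * (1 + (M:ℝ))^(1+s)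
        = (1 + (M:ℝ))^(s+1)/(s+1) + (1 + (M:ℝ))^(s+1) := by
      rw [show (1:ℝ)+s = s+1 by ring]; ring
    rw [heq]
    linarith [key]

lemma Beq {N : ℕ} (hN : 1 ≤ N) :
    ∑ m ∈ Finset.Icc 1 N, (m:ℝ)^(-1:ℝ) ≤ 1 + Real.log N := by
  have : ∑ m ∈ Finset.Icc 1 N, (m:ℝ)^(-1:ℝ) = ((harmonic N : ℚ) : ℝ) := by
    rw [harmonic_eq_sum_Icc]
    push_cast
    exact Finset.sum_congr rfl fun m _ => Real.rpow_neg_one m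
  rw [this]
  exact harmonic_le_one_add_log N

lemma Blt {s : ℝ} (hs : s < -1) (N : ℕ) :
    ∑ m ∈ Finset.Icc 1 N, (m:ℝ)^s ≤ ∑' m : ℕ, (m:ℝ)^s :=
  Summable.sum_le_tsum _ (fun m _ => Real.rpow_nonneg (Nat.cast_nonneg m) s)
    ((Real.summable_nat_rpow).mpr hs)

lemma keyineq {r γ : ℝ} (hr : 0 < r) (hγ : 1 < γ) (N k : ℕ) :
    ∑ m ∈ Finset.Icc 1 N, (m:ℝ)^r/(1+|(m:ℝ)-(k:ℝ)|^γ) ≤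
      2^(1+r) * (1 + ∑' d:ℕ, 1/(d:ℝ)^γ) * (k:ℝ)^r
        + 2^γ * ∑ m ∈ Finset.Icc 1 N, (m:ℝ)^(r-γ) := by
  have habs : ∀ m : ℕ, (0:ℝ) ≤ 1 + |(m:ℝ)-(k:ℝ)|^γ := fun m => by positivity
  rw [← Finset.sum_filter_add_sum_filter_not (Finset.Icc 1 N) (fun m => 2*k < m)
    (fun m => (m:ℝ)^r/(1+|(m:ℝ)-(k:ℝ)|^γ))]
  rw [add_comm]
  apply add_le_add
  · -- part A : m ≤ 2k
    calc ∑ m ∈ (Finset.Icc 1 N).filter (fun m => ¬ 2*k < m), (m:ℝ)^r/(1+|(m:ℝ)-(k:ℝ)|^γ)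
        ≤ ∑ m ∈ (Finset.Icc 1 N).filter (fun m => ¬ 2*k < m),
            ((2*k:ℕ):ℝ)^r * (1/(1+|(m:ℝ)-(k:ℝ)|^γ)) := by
          apply Finset.sum_le_sum
          intro m hm
          simp only [Finset.mem_filter, not_lt] at hm
          rw [mul_one_div]
          have hd : (0:ℝ) < 1 + |(m:ℝ)-(k:ℝ)|^γ := by positivity
          exact (div_le_div_iff_of_pos_right hd).mpr
            (Real.rpow_le_rpow (Nat.cast_nonneg m) (by exact_mod_cast hm.2) hr.le)
      _ = ((2*k:ℕ):ℝ)^r * ∑ m ∈ (Finset.Icc 1 N).filter (fun m => ¬ 2*k < m),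
            1/(1+|(m:ℝ)-(k:ℝ)|^γ) := by rw [Finset.mul_sum]
      _ ≤ ((2*k:ℕ):ℝ)^r * ∑ m ∈ Finset.Icc 1 N, 1/(1+|(m:ℝ)-(k:ℝ)|^γ) := by
          apply mul_le_mul_of_nonneg_left _ (Real.rpow_nonneg (Nat.cast_nonneg _) r)
          apply Finset.sum_le_sum_of_subset_of_nonneg (Finset.filter_subset _ _)
          intro m _ _; positivity
      _ ≤ ((2*k:ℕ):ℝ)^r * (2*(1 + ∑' d:ℕ, 1/(d:ℝ)^γ)) := by
          apply mul_le_mul_of_nonneg_left (gsum hγ N k) (Real.rpow_nonneg (Nat.cast_nonneg _) r)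
      _ = 2^(1+r) * (1 + ∑' d:ℕ, 1/(d:ℝ)^γ) * (k:ℝ)^r := by
          push_cast
          rw [Real.mul_rpow (by norm_num) (Nat.cast_nonneg k),
            Real.rpow_add (by norm_num : (0:ℝ) < 2), Real.rpow_one]
          ring
  · -- part B : 2k < m
    calc ∑ m ∈ (Finset.Icc 1 N).filter (fun m => 2*k < m), (m:ℝ)^r/(1+|(m:ℝ)-(k:ℝ)|^γ)
        ≤ ∑ m ∈ (Finset.Icc 1 N).filter (fun m => 2*k < m), 2^γ * (m:ℝ)^(r-γ) := by
          apply Finset.sum_le_sum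
          intro m hm
          simp only [Finset.mem_filter, Finset.mem_Icc] at hm
          have hm1 : (1:ℝ) ≤ (m:ℝ) := by exact_mod_cast hm.1.1
          have hm0 : (0:ℝ) < (m:ℝ) := by linarith
          have hk2 : (2:ℝ)*(k:ℝ) ≤ (m:ℝ) := by exact_mod_cast hm.2.le
          have hhalf : (m:ℝ)/2 ≤ |(m:ℝ)-(k:ℝ)| := by
            rw [abs_of_nonneg (by linarith)]
            linarith
          have h1 : ((m:ℝ)/2)^γ ≤ |(m:ℝ)-(k:ℝ)|^γ :=
            Real.rpow_le_rpow (by positivity) hhalf (by linarith)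
          have h2 : (0:ℝ) < ((m:ℝ)/2)^γ := by positivity
          calc (m:ℝ)^r/(1+|(m:ℝ)-(k:ℝ)|^γ) ≤ (m:ℝ)^r/(((m:ℝ)/2)^γ) :=
                div_le_div_of_nonneg_left (Real.rpow_nonneg hm0.le r) h2 (by linarith)
            _ = 2^γ * (m:ℝ)^(r-γ) := by
                rw [Real.div_rpow hm0.le (by norm_num : (0:ℝ) ≤ 2), Real.rpow_sub hm0]
                have h3 : (0:ℝ) < (2:ℝ)^γ := by positivity
                field_simp
      _ = 2^γ * ∑ m ∈ (Finset.Icc 1 N).filter (fun m => 2*k < m), (m:ℝ)^(r-γ) := by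
          rw [Finset.mul_sum]
      _ ≤ 2^γ * ∑ m ∈ Finset.Icc 1 N, (m:ℝ)^(r-γ) := by
          apply mul_le_mul_of_nonneg_left _ (by positivity)
          apply Finset.sum_le_sum_of_subset_of_nonneg (Finset.filter_subset _ _)
          intro m _ _
          exact Real.rpow_nonneg (Nat.cast_nonneg m) _


open scoped Classical

theorem stmt_12 (r γ : ℝ) (hr : 0 < r) (hγ : 1 < γ) :
    ∃ c : ℝ, 0 < c ∧ ∀ (N : ℕ), 1 ≤ N → ∀ (k : ℕ),
      ∑ m ∈ Finset.Icc 1 N, (m : ℝ) ^ r / (1 + |(m : ℝ) - (k : ℝ)| ^ γ) ≤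
        c * ((N : ℝ) ^ (max (1 + r - γ) 0) +
          (if γ = 1 + r then Real.log N else 0) + (k : ℝ) ^ r) := by
  have htnn : (0:ℝ) ≤ ∑' d:ℕ, 1/(d:ℝ)^γ := tsum_nonneg (fun d => by positivity)
  have h2γ : (0:ℝ) < (2:ℝ)^γ := by positivity
  have hP : (0:ℝ) < 2^(1+r) * (1 + ∑' d:ℕ, 1/(d:ℝ)^γ) := by positivity
  rcases lt_trichotomy (r - γ) (-1) with hc | hc | hc
  · -- r - γ < -1 : convergent tail
    have hT : (0:ℝ) ≤ ∑' m:ℕ, (m:ℝ)^(r-γ) :=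
      tsum_nonneg (fun m => Real.rpow_nonneg (Nat.cast_nonneg m) _)
    refine ⟨2^(1+r) * (1 + ∑' d:ℕ, 1/(d:ℝ)^γ) + 2^γ * (∑' m:ℕ, (m:ℝ)^(r-γ)) + 1,
      by positivity, ?_⟩
    intro N hN k
    have hmax : max (1 + r - γ) 0 = 0 := max_eq_right (by linarith)
    have hif : ¬ γ = 1 + r := fun h => by rw [h] at hc; linarith
    rw [hmax, if_neg hif, Real.rpow_zero]
    have h1 := keyineq hr hγ N k
    have h2 : 2^γ * ∑ m ∈ Finset.Icc 1 N, (m:ℝ)^(r-γ)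
        ≤ 2^γ * ∑' m:ℕ, (m:ℝ)^(r-γ) :=
      mul_le_mul_of_nonneg_left (Blt hc N) h2γ.le
    have hkr : (0:ℝ) ≤ (k:ℝ)^r := Real.rpow_nonneg (Nat.cast_nonneg k) r
    have hd1 : (0:ℝ) ≤ (2^γ * (∑' m:ℕ, (m:ℝ)^(r-γ)) + 1) * (k:ℝ)^r :=
      mul_nonneg (by positivity) hkr
    nlinarith [h1, h2, hkr, hd1]
  · -- r - γ = -1 : logarithmic case
    have hge : γ = 1 + r := by linarith
    refine ⟨2^(1+r) * (1 + ∑' d:ℕ, 1/(d:ℝ)^γ) + 2^γ + 1, by positivity, ?_⟩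
    intro N hN k
    have hmax : max (1 + r - γ) 0 = 0 := max_eq_right (by linarith)
    rw [hmax, if_pos hge, Real.rpow_zero]
    have h1 := keyineq hr hγ N k
    have h2 : 2^γ * ∑ m ∈ Finset.Icc 1 N, (m:ℝ)^(r-γ)
        ≤ 2^γ * (1 + Real.log N) := by
      apply mul_le_mul_of_nonneg_left _ h2γ.le
      rw [show r - γ = -1 by linarith]
      exact Beq hN
    have hkr : (0:ℝ) ≤ (k:ℝ)^r := Real.rpow_nonneg (Nat.cast_nonneg k) r
    have hlog : (0:ℝ) ≤ Real.log N := Real.log_nonneg (by exact_mod_cast hN)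
    have hd1 : (0:ℝ) ≤ (2^γ + 1) * (k:ℝ)^r := mul_nonneg (by positivity) hkr
    have hd2 : (0:ℝ) ≤ (2^(1+r) * (1 + ∑' d:ℕ, 1/(d:ℝ)^γ) + 1) * Real.log N :=
      mul_nonneg (by positivity) hlog
    nlinarith [h1, h2, hkr, hlog, hd1, hd2]
  · -- -1 < r - γ : polynomial case
    have hCpos : (0:ℝ) < 1 + 1/(1+(r-γ)) := by
      have h0 : (0:ℝ) < 1 + (r-γ) := by linarith
      positivity
    refine ⟨2^(1+r) * (1 + ∑' d:ℕ, 1/(d:ℝ)^γ) + 2^γ * (1 + 1/(1+(r-γ))) + 1,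
      by positivity, ?_⟩
    intro N hN k
    have hmax : max (1 + r - γ) 0 = 1 + r - γ := max_eq_left (by linarith)
    have hif : ¬ γ = 1 + r := fun h => by rw [h] at hc; linarith
    rw [hmax, if_neg hif]
    have h1 := keyineq hr hγ N k
    have h2 : 2^γ * ∑ m ∈ Finset.Icc 1 N, (m:ℝ)^(r-γ)
        ≤ 2^γ * ((1 + 1/(1+(r-γ))) * (N:ℝ)^(1+r-γ)) := by
      apply mul_le_mul_of_nonneg_left _ h2γ.le
      have := Bgt hc hN
      rw [show (1:ℝ) + (r-γ) = 1 + r - γ by ring] at this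
      calc ∑ m ∈ Finset.Icc 1 N, (m:ℝ)^(r-γ)
          ≤ (1 + 1/(1+r-γ)) * (N:ℝ)^(1+r-γ) := this
        _ = (1 + 1/(1+(r-γ))) * (N:ℝ)^(1+r-γ) := by ring_nf
    have hkr : (0:ℝ) ≤ (k:ℝ)^r := Real.rpow_nonneg (Nat.cast_nonneg k) r
    have hNp : (0:ℝ) ≤ (N:ℝ)^(1+r-γ) := Real.rpow_nonneg (Nat.cast_nonneg N) _
    have hd1 : (0:ℝ) ≤ (2^γ * (1 + 1/(1+(r-γ))) + 1) * (k:ℝ)^r :=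
      mul_nonneg (by positivity) hkr
    have hd2 : (0:ℝ) ≤ (2^(1+r) * (1 + ∑' d:ℕ, 1/(d:ℝ)^γ) + 1) * (N:ℝ)^(1+r-γ) :=
      mul_nonneg (by positivity) hNp
    nlinarith [h1, h2, hkr, hNp, hd1, hd2]
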